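/- Description of H ∩ S: the intersection of the subgroups H and S of SL(2,ℂ) × SL(2,ℂ) equals the set of pairs (A, εA) with ε ∈ {1,−1} and A a diagonal or antidiagonal matrix in SL(2,ℂ); explicitly, H ∩ S = {(diag(λ,λ⁻¹), ±diag(λ,λ⁻¹)) : λ ∈ ℂˣ} ∪ {(antidiag(η,−η⁻¹), ±antidiag(η,−η⁻¹)) : η ∈ ℂˣ}, where antidiag(η,−η⁻¹) denotes the matrix with rows (0, η), (−η⁻¹, 0). -/

import Mathlib

open Matrix

abbrev SL2 := Matrix.SpecialLinearGroup (Fin 2) ℂ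

instance : Fact (Even (Fintype.card (Fin 2))) := ⟨by simp⟩

/-- The subgroup `H = {(A, εA) : A ∈ SL(2,ℂ), ε ∈ {1,−1}}` of `SL(2,ℂ) × SL(2,ℂ)`. -/
def Hsub : Subgroup (SL2 × SL2) where
  carrier := {p | p.2 = p.1 ∨ p.2 = -p.1}
  one_mem' := Or.inl rfl
  mul_mem' := by
    intro a b ha hb
    simp only [Set.mem_setOf_eq, Prod.snd_mul, Prod.fst_mul] at *
    rcases ha with ha | ha <;> rcases hb with hb | hb <;> rw [ha, hb] <;>
      simp [mul_neg, neg_mul, neg_neg]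
  inv_mem' := by
    intro a ha
    simp only [Set.mem_setOf_eq, Prod.snd_inv, Prod.fst_inv] at *
    rcases ha with ha | ha <;> rw [ha] <;> simp [inv_neg]

/-- The subgroup `S` of `SL(2,ℂ) × SL(2,ℂ)` consisting of the pairs `(A,B)` with `A`
and `B` both diagonal or both antidiagonal. -/
def Ssub : Subgroup (SL2 × SL2) where
  carrier := {p |
    ((p.1 : Matrix (Fin 2) (Fin 2) ℂ) 0 1 = 0 ∧ (p.1 : Matrix (Fin 2) (Fin 2) ℂ) 1 0 = 0 ∧
     (p.2 : Matrix (Fin 2) (Fin 2) ℂ) 0 1 = 0 ∧ (p.2 : Matrix (Fin 2) (Fin 2) ℂ) 1 0 = 0) ∨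
    ((p.1 : Matrix (Fin 2) (Fin 2) ℂ) 0 0 = 0 ∧ (p.1 : Matrix (Fin 2) (Fin 2) ℂ) 1 1 = 0 ∧
     (p.2 : Matrix (Fin 2) (Fin 2) ℂ) 0 0 = 0 ∧ (p.2 : Matrix (Fin 2) (Fin 2) ℂ) 1 1 = 0)}
  one_mem' := by
    left
    simp [Matrix.SpecialLinearGroup.coe_one, Matrix.one_apply]
  mul_mem' := by
    intro a b ha hb
    rcases ha with ⟨h1, h2, h3, h4⟩ | ⟨h1, h2, h3, h4⟩ <;>
      rcases hb with ⟨g1, g2, g3, g4⟩ | ⟨g1, g2, g3, g4⟩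
    · left
      refine ⟨?_, ?_, ?_, ?_⟩ <;>
        simp [Prod.fst_mul, Prod.snd_mul, Matrix.mul_apply, Fin.sum_univ_two,
          h1, h2, h3, h4, g1, g2, g3, g4]
    · right
      refine ⟨?_, ?_, ?_, ?_⟩ <;>
        simp [Prod.fst_mul, Prod.snd_mul, Matrix.mul_apply, Fin.sum_univ_two,
          h1, h2, h3, h4, g1, g2, g3, g4]
    · right
      refine ⟨?_, ?_, ?_, ?_⟩ <;>
        simp [Prod.fst_mul, Prod.snd_mul, Matrix.mul_apply, Fin.sum_univ_two,
          h1, h2, h3, h4, g1, g2, g3, g4]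
    · left
      refine ⟨?_, ?_, ?_, ?_⟩ <;>
        simp [Prod.fst_mul, Prod.snd_mul, Matrix.mul_apply, Fin.sum_univ_two,
          h1, h2, h3, h4, g1, g2, g3, g4]
  inv_mem' := by
    intro a ha
    rcases ha with ⟨h1, h2, h3, h4⟩ | ⟨h1, h2, h3, h4⟩
    · left
      refine ⟨?_, ?_, ?_, ?_⟩ <;>
        simp [Prod.fst_inv, Prod.snd_inv, Matrix.SpecialLinearGroup.coe_inv,
          Matrix.adjugate_fin_two, h1, h2, h3, h4]
    · right
      refine ⟨?_, ?_, ?_, ?_⟩ <;>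
        simp [Prod.fst_inv, Prod.snd_inv, Matrix.SpecialLinearGroup.coe_inv,
          Matrix.adjugate_fin_two, h1, h2, h3, h4]

/-- The diagonal matrix `diag(t, t⁻¹)` as an element of `SL(2,ℂ)`. -/
def dmat (t : ℂˣ) : SL2 :=
  ⟨!![(t : ℂ), 0; 0, ((t⁻¹ : ℂˣ) : ℂ)], by simp [Matrix.det_fin_two_of]⟩

lemma dmat_one : dmat 1 = 1 := by
  apply Subtype.ext
  simp only [dmat, Matrix.SpecialLinearGroup.coe_one, Matrix.one_fin_two]
  norm_num

lemma dmat_mul (s t : ℂˣ) : dmat (s * t) = dmat s * dmat t := by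
  apply Subtype.ext
  rw [Matrix.SpecialLinearGroup.coe_mul]
  ext i j
  fin_cases i <;> fin_cases j <;>
    simp [dmat, Matrix.mul_apply, Fin.sum_univ_two, mul_comm]

lemma dmat_inv (t : ℂˣ) : (dmat t)⁻¹ = dmat t⁻¹ := by
  apply Subtype.ext
  rw [Matrix.SpecialLinearGroup.coe_inv]
  ext i j
  fin_cases i <;> fin_cases j <;>
    simp [dmat, Matrix.adjugate_fin_two]

/-- The antidiagonal matrix with rows `(0, η)`, `(−η⁻¹, 0)` as an element of
`SL(2,ℂ)`. -/
def amat (η : ℂˣ) : SL2 :=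
  ⟨!![0, (η : ℂ); -((η⁻¹ : ℂˣ) : ℂ), 0], by simp [Matrix.det_fin_two_of]⟩

lemma mem_Hsub_iff (p : SL2 × SL2) : p ∈ Hsub ↔ (p.2 = p.1 ∨ p.2 = -p.1) := Iff.rfl

lemma mem_Ssub_iff (p : SL2 × SL2) : p ∈ Ssub ↔
    (((p.1 : Matrix (Fin 2) (Fin 2) ℂ) 0 1 = 0 ∧ (p.1 : Matrix (Fin 2) (Fin 2) ℂ) 1 0 = 0 ∧
     (p.2 : Matrix (Fin 2) (Fin 2) ℂ) 0 1 = 0 ∧ (p.2 : Matrix (Fin 2) (Fin 2) ℂ) 1 0 = 0) ∨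
    ((p.1 : Matrix (Fin 2) (Fin 2) ℂ) 0 0 = 0 ∧ (p.1 : Matrix (Fin 2) (Fin 2) ℂ) 1 1 = 0 ∧
     (p.2 : Matrix (Fin 2) (Fin 2) ℂ) 0 0 = 0 ∧ (p.2 : Matrix (Fin 2) (Fin 2) ℂ) 1 1 = 0)) :=
  Iff.rfl

lemma eq_dmat (A : SL2) (h01 : (A : Matrix (Fin 2) (Fin 2) ℂ) 0 1 = 0)
    (h10 : (A : Matrix (Fin 2) (Fin 2) ℂ) 1 0 = 0) : ∃ l : ℂˣ, A = dmat l := by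
  have hdet : (A : Matrix (Fin 2) (Fin 2) ℂ).det = 1 := A.2
  rw [Matrix.det_fin_two, h01, h10] at hdet
  simp only [mul_zero, sub_zero] at hdet
  have ha : (A : Matrix (Fin 2) (Fin 2) ℂ) 0 0 ≠ 0 := by
    intro h; rw [h, zero_mul] at hdet; exact zero_ne_one hdet
  refine ⟨Units.mk0 _ ha, ?_⟩
  apply Subtype.ext
  have hd : (A : Matrix (Fin 2) (Fin 2) ℂ) 1 1 = ((A : Matrix (Fin 2) (Fin 2) ℂ) 0 0)⁻¹ :=
    eq_inv_of_mul_eq_one_right hdet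
  ext i j
  fin_cases i <;> fin_cases j <;>
    simp [dmat, h01, h10, hd]

lemma eq_amat (A : SL2) (h00 : (A : Matrix (Fin 2) (Fin 2) ℂ) 0 0 = 0)
    (h11 : (A : Matrix (Fin 2) (Fin 2) ℂ) 1 1 = 0) : ∃ e : ℂˣ, A = amat e := by
  have hdet : (A : Matrix (Fin 2) (Fin 2) ℂ).det = 1 := A.2
  rw [Matrix.det_fin_two, h00, h11] at hdet
  simp only [zero_mul, zero_sub] at hdet
  have hb : (A : Matrix (Fin 2) (Fin 2) ℂ) 0 1 ≠ 0 := by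
    intro h; rw [h, zero_mul] at hdet; simp at hdet
  refine ⟨Units.mk0 _ hb, ?_⟩
  apply Subtype.ext
  have hc : (A : Matrix (Fin 2) (Fin 2) ℂ) 1 0 = -((A : Matrix (Fin 2) (Fin 2) ℂ) 0 1)⁻¹ := by
    field_simp
    linear_combination -hdet
  ext i j
  fin_cases i <;> fin_cases j <;>
    simp [amat, h00, h11, hc]

/-- **Description of `H ∩ S`.** The intersection of the subgroups `H` and `S` of
`SL(2,ℂ) × SL(2,ℂ)` is
`{(diag(λ,λ⁻¹), ±diag(λ,λ⁻¹)) : λ ∈ ℂˣ} ∪ {(antidiag(η,−η⁻¹), ±antidiag(η,−η⁻¹)) : η ∈ ℂˣ}`. -/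
theorem H_inf_S_description :
    ((Hsub ⊓ Ssub : Subgroup (SL2 × SL2)) : Set (SL2 × SL2)) =
      {p | ∃ l : ℂˣ, p = (dmat l, dmat l) ∨ p = (dmat l, -dmat l)} ∪
      {p | ∃ e : ℂˣ, p = (amat e, amat e) ∨ p = (amat e, -amat e)} := by
  ext p
  simp only [SetLike.mem_coe, Subgroup.mem_inf, mem_Hsub_iff, mem_Ssub_iff, Set.mem_union,
    Set.mem_setOf_eq]
  constructor
  · rintro ⟨hH, hS⟩
    rcases hS with ⟨h1, h2, _, _⟩ | ⟨h1, h2, _, _⟩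
    · obtain ⟨l, hl⟩ := eq_dmat p.1 h1 h2
      refine Or.inl ⟨l, ?_⟩
      rcases hH with hH | hH
      · exact Or.inl (Prod.ext_iff.mpr ⟨hl, hH.trans hl⟩)
      · exact Or.inr (Prod.ext_iff.mpr ⟨hl, hH.trans (by rw [hl])⟩)
    · obtain ⟨e, he⟩ := eq_amat p.1 h1 h2
      refine Or.inr ⟨e, ?_⟩
      rcases hH with hH | hH
      · exact Or.inl (Prod.ext_iff.mpr ⟨he, hH.trans he⟩)
      · exact Or.inr (Prod.ext_iff.mpr ⟨he, hH.trans (by rw [he])⟩)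
  · rintro (⟨l, h | h⟩ | ⟨e, h | h⟩) <;> subst h <;>
      constructor <;>
      simp only [Matrix.SpecialLinearGroup.coe_neg, true_or] <;>
      simp [dmat, amat]
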